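/- Let π ∈ S_n and assume v_i ≤ v_q with i ≤ q, that Next_π(v_i) is not a pinnacle of π, and that Next_π(v_i) < y_{q−1}. Then there exist two balanced reversals transforming π into a permutation π'' such that the only differences between π and π'' are: (i) if Next_π(v_i) > v_q, then Next_π(v_i) is moved immediately before cutD_π(Next_π(v_i), y_{q−1}, v_q), so that Next_π(v_i) ∈ D_{π''}(y_{q−1}, v_q); (ii) if Next_π(v_i) < v_q, then Next_π(v_i) is moved immediately before v_q and becomes the dell v''_q of π''. -/

import Mathlib

/-- The block reversal: reverses the block of `π` between positions `a` and `b`. -/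
def rev (π : ℕ → ℕ) (a b : ℕ) : ℕ → ℕ := fun i =>
  if a ≤ i ∧ i ≤ b then π (a + b - i) else π i

/-- Position `i` holds a pinnacle: `π (i-1) < π i > π (i+1)`. -/
def PinAt (π : ℕ → ℕ) (i : ℕ) : Prop := π (i - 1) < π i ∧ π (i + 1) < π i

/-- Position `i` holds a dell: `π (i-1) > π i < π (i+1)`. -/
def DellAt (π : ℕ → ℕ) (i : ℕ) : Prop := π i < π (i - 1) ∧ π i < π (i + 1)

/-- Position `i` is ascending: its element belongs to an ascending set of `π`. -/
def AscAt (π : ℕ → ℕ) (i : ℕ) : Prop := π (i - 1) < π i ∧ π i < π (i + 1)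

/-- Position `i` is descending: its element belongs to a descending set of `π`. -/
def DescAt (π : ℕ → ℕ) (i : ℕ) : Prop := π i < π (i - 1) ∧ π (i + 1) < π i

/-- The pinnacle set of `π ∈ S_n`, as a finset of values. -/
def pinFinset (n : ℕ) (π : ℕ → ℕ) : Finset ℕ :=
  ((Finset.Icc 1 n).filter fun i => π (i - 1) < π i ∧ π (i + 1) < π i).image π

/-- The reversal with endpoints at positions `a ≤ b` is balanced for `π`:
it does not modify the pinnacle set. -/
def BalancedRev (n : ℕ) (π : ℕ → ℕ) (a b : ℕ) : Prop :=
  pinFinset n (rev π a b) = pinFinset n π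

/-- Apply a sequence of reversals (each given by its pair of positions). -/
def applySeq (π : ℕ → ℕ) : List (ℕ × ℕ) → ℕ → ℕ
  | [] => π
  | ab :: L => applySeq (rev π ab.1 ab.2) L

/-- Every reversal of the sequence is balanced for the permutation to which
it is applied. -/
def IsBalancedSeq (n : ℕ) (π : ℕ → ℕ) : List (ℕ × ℕ) → Prop
  | [] => True
  | ab :: L => 1 ≤ ab.1 ∧ ab.1 ≤ ab.2 ∧ ab.2 ≤ n ∧ BalancedRev n π ab.1 ab.2 ∧
      IsBalancedSeq n (rev π ab.1 ab.2) L

/-- `π` is the extension of a permutation of `{1,…,n}` by the boundary values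
`π 0 = n+1` and `π (n+1) = n+2`. -/
def IsExtPerm (n : ℕ) (π : ℕ → ℕ) : Prop :=
  Set.BijOn π (Set.Icc 1 n) (Set.Icc 1 n) ∧ π 0 = n + 1 ∧ π (n + 1) = n + 2

/-- The positions of the pinnacles of `π`, from left to right. -/
def pinPosList (n : ℕ) (π : ℕ → ℕ) : List ℕ :=
  ((Finset.Icc 1 n).filter fun i => π (i - 1) < π i ∧ π (i + 1) < π i).sort (· ≤ ·)

/-- The positions of the dells of `π`, from left to right. -/
def dellPosList (n : ℕ) (π : ℕ → ℕ) : List ℕ :=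
  ((Finset.Icc 1 n).filter fun i => π i < π (i - 1) ∧ π i < π (i + 1)).sort (· ≤ ·)

/-- The pinnacles `y_1, …, y_p` of `π`, from left to right. -/
def pinList (n : ℕ) (π : ℕ → ℕ) : List ℕ := (pinPosList n π).map π

/-- The dells `v_1, …, v_{p+1}` of `π`, from left to right. -/
def dellList (n : ℕ) (π : ℕ → ℕ) : List ℕ := (dellPosList n π).map π

/-- The position of the dell `v q` (dells are indexed from `1`). -/
def vPos (n : ℕ) (π : ℕ → ℕ) (q : ℕ) : ℕ := (dellPosList n π).getD (q - 1) 0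

/-- The dell `v q`. -/
def vVal (n : ℕ) (π : ℕ → ℕ) (q : ℕ) : ℕ := π (vPos n π q)

/-- The position of the pinnacle `y q`, where `y 0` is at position `0` and
`y (p+1)` is at position `n+1`. -/
def yPos (n : ℕ) (π : ℕ → ℕ) (q : ℕ) : ℕ :=
  if q = 0 then 0 else (pinPosList n π).getD (q - 1) (n + 1)

/-- The pinnacle `y q`, where `y 0 = π 0 = n+1` and `y (p+1) = π (n+1) = n+2`. -/
def yVal (n : ℕ) (π : ℕ → ℕ) (q : ℕ) : ℕ := π (yPos n π q)

/-- The elements of `π` at positions `1, …, n`, read from left to right. -/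
def toList (n : ℕ) (π : ℕ → ℕ) : List ℕ := (List.range n).map fun i => π (i + 1)

/-- The cutpoint `cutA_π(z, v_q, y_q)`: the largest element `e` of
`A_π(v_q, y_q) ∪ {v_q}` such that `e < z`. -/
noncomputable def cutA (n : ℕ) (π : ℕ → ℕ) (q z : ℕ) : ℕ :=
  sSup ((insert (vVal n π q) (π '' Set.Ioo (vPos n π q) (yPos n π q))) ∩ Set.Iio z)

/-- The cutpoint `cutD_π(z, y_{q-1}, v_q)`: the largest element `e` of
`D_π(y_{q-1}, v_q) ∪ {v_q}` such that `e < z`. -/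
noncomputable def cutD (n : ℕ) (π : ℕ → ℕ) (q z : ℕ) : ℕ :=
  sSup ((insert (vVal n π q) (π '' Set.Ioo (yPos n π (q - 1)) (vPos n π q))) ∩ Set.Iio z)

/-- The canonical permutation `Id_S ∈ S_n` (extended by its boundary values):
the elements of `S` in increasing order at positions `2, 4, …, 2|S|`, and the
elements of `{1,…,n} \ S` in increasing order at the remaining positions. -/
def canon (n : ℕ) (S : Finset ℕ) : ℕ → ℕ := fun i =>
  if i = 0 then n + 1
  else if i = n + 1 then n + 2
  else if i ≤ 2 * S.card ∧ i % 2 = 0 then (S.sort (· ≤ ·)).getD (i / 2 - 1) 0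
  else if i ≤ 2 * S.card then (((Finset.Icc 1 n) \ S).sort (· ≤ ·)).getD ((i - 1) / 2) 0
  else (((Finset.Icc 1 n) \ S).sort (· ≤ ·)).getD (i - S.card - 1) 0



lemma getD_eq_get' (l : List ℕ) (k d : ℕ) (h : k < l.length) : l.getD k d = l.get ⟨k, h⟩ := by
  simp [List.getD_eq_getElem?_getD, List.getElem?_eq_getElem h]

lemma getD_eq_get (l : List ℕ) (k : ℕ) (h : k < l.length) : l.getD k 0 = l.get ⟨k, h⟩ :=
  getD_eq_get' l k 0 h

lemma entry_mem (F : Finset ℕ) (k : ℕ) (hk : k < F.card) : (F.sort (·≤·)).getD k 0 ∈ F := by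
  have hlen : k < (F.sort (·≤·)).length := by rw [Finset.length_sort]; exact hk
  rw [getD_eq_get _ _ hlen]
  exact (Finset.mem_sort _).1 (List.get_mem _ _)

lemma entry_lt_entry (F : Finset ℕ) {j k : ℕ} (hjk : j < k) (hk : k < F.card) :
    (F.sort (·≤·)).getD j 0 < (F.sort (·≤·)).getD k 0 := by
  have hlen : k < (F.sort (·≤·)).length := by rw [Finset.length_sort]; exact hk
  have hlenj : j < (F.sort (·≤·)).length := by omega
  rw [getD_eq_get _ _ hlen, getD_eq_get _ _ hlenj]
  exact (Finset.sortedLT_sort F).strictMono_get (by exact hjk)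

lemma filter_card_entry (F : Finset ℕ) (k : ℕ) (hk : k < F.card) :
    (F.filter (· < (F.sort (·≤·)).getD k 0)).card = k := by
  set l := F.sort (·≤·) with hl
  have hlen : k < l.length := by rw [hl, Finset.length_sort]; exact hk
  have hsm := (Finset.sortedLT_sort F).strictMono_get
  rw [getD_eq_get _ _ hlen]
  have himg : F.filter (· < l.get ⟨k, hlen⟩) = (Finset.range k).image (fun j => l.getD j 0) := by
    ext y
    simp only [Finset.mem_filter, Finset.mem_image, Finset.mem_range]
    constructor
    · rintro ⟨hyF, hyx⟩
      have hyl : y ∈ l := (Finset.mem_sort _).2 hyF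
      obtain ⟨⟨j, hj⟩, rfl⟩ := List.mem_iff_get.1 hyl
      refine ⟨j, ?_, getD_eq_get _ _ hj⟩
      by_contra hc
      have : l.get ⟨k, hlen⟩ ≤ l.get ⟨j, hj⟩ := by
        rcases eq_or_lt_of_le (not_lt.1 hc) with h | h
        · exact le_of_eq (congrArg _ (Fin.ext h))
        · exact le_of_lt (hsm (by exact h))
      omega
    · rintro ⟨j, hj, rfl⟩
      have hjl : j < l.length := by omega
      rw [getD_eq_get _ _ hjl]
      exact ⟨(Finset.mem_sort _).1 (List.get_mem _ _), hsm (by exact hj)⟩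
  rw [himg, Finset.card_image_of_injOn, Finset.card_range]
  intro j1 h1 j2 h2 he
  simp only [Finset.coe_range, Set.mem_Iio] at h1 h2
  have hj1 : j1 < l.length := by omega
  have hj2 : j2 < l.length := by omega
  change l.getD j1 0 = l.getD j2 0 at he
  rw [getD_eq_get _ _ hj1, getD_eq_get _ _ hj2] at he
  exact congrArg Fin.val (hsm.injective he)

lemma entry_lt_of_card_filter (F : Finset ℕ) (x k : ℕ)
    (h : k + 1 ≤ (F.filter (· < x)).card) :
    k < F.card ∧ (F.sort (·≤·)).getD k 0 < x := by
  have hk : k < F.card := lt_of_lt_of_le (by omega) (Finset.card_le_card (Finset.filter_subset (· < x) F))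
  refine ⟨hk, ?_⟩
  by_contra hc
  push_neg at hc
  -- every element of the filter has index < k
  set l := F.sort (·≤·) with hl
  have hlen : k < l.length := by rw [hl, Finset.length_sort]; exact hk
  have hsm := (Finset.sortedLT_sort F).strictMono_get
  rw [getD_eq_get _ _ hlen] at hc
  have hsub : F.filter (· < x) ⊆ (Finset.range k).image (fun j => l.getD j 0) := by
    intro y hy
    simp only [Finset.mem_filter] at hy
    have hyl : y ∈ l := (Finset.mem_sort _).2 hy.1
    obtain ⟨⟨j, hj⟩, rfl⟩ := List.mem_iff_get.1 hyl
    simp only [Finset.mem_image, Finset.mem_range]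
    refine ⟨j, ?_, getD_eq_get _ _ hj⟩
    by_contra hjk
    have : l.get ⟨k, hlen⟩ ≤ l.get ⟨j, hj⟩ := by
      rcases eq_or_lt_of_le (not_lt.1 hjk) with h' | h'
      · exact le_of_eq (congrArg _ (Fin.ext h'))
      · exact le_of_lt (hsm (by exact h'))
    omega
  have hc1 := Finset.card_le_card hsub
  have hc2 := Finset.card_image_le (s := Finset.range k) (f := fun j => l.getD j 0)
  rw [Finset.card_range] at hc2
  omega

lemma entry_of_card_filter (F : Finset ℕ) (x k : ℕ) (hx : x ∈ F)
    (h : (F.filter (· < x)).card = k) : (F.sort (·≤·)).getD k 0 = x := by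
  set l := F.sort (·≤·) with hl
  have hyl : x ∈ l := (Finset.mem_sort _).2 hx
  obtain ⟨⟨j, hj⟩, rfl⟩ := List.mem_iff_get.1 hyl
  have hjcard : j < F.card := by rw [← Finset.length_sort (·≤·)]; exact hj
  have := filter_card_entry F j hjcard
  rw [getD_eq_get _ _ (by omega : j < l.length)] at this
  have hjk : j = k := by omega
  subst hjk
  exact getD_eq_get _ _ (by omega)


/- ===== Section 1: rev basics ===== -/

lemma rev_mem (π : ℕ → ℕ) {a b i : ℕ} (h1 : a ≤ i) (h2 : i ≤ b) :
    rev π a b i = π (a + b - i) := if_pos ⟨h1, h2⟩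

lemma rev_not (π : ℕ → ℕ) {a b i : ℕ} (h : ¬(a ≤ i ∧ i ≤ b)) :
    rev π a b i = π i := if_neg h

lemma rev_self (π : ℕ → ℕ) (a : ℕ) : rev π a a = π := by
  funext i
  by_cases h : a ≤ i ∧ i ≤ a
  · rw [rev_mem π h.1 h.2]; congr 1; omega
  · exact rev_not π h

lemma pinAt_iff (π : ℕ → ℕ) (j : ℕ) : PinAt π j ↔ (π (j-1) < π j ∧ π (j+1) < π j) := Iff.rfl

/- ===== Section 2: balancedness criterion ===== -/

lemma pinFinset_rev_eq (n a b : ℕ) (π : ℕ → ℕ) (ha : 1 ≤ a) (hab : a < b) (hb : b ≤ n)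
    (h1 : 2 ≤ a → ((π (a-2) < π (a-1) ∧ π a < π (a-1)) ↔ (π (a-2) < π (a-1) ∧ π b < π (a-1))))
    (h2 : (π (a-1) < π b ∧ π (b-1) < π b) ↔ (π (b-1) < π b ∧ π (b+1) < π b))
    (h3 : (π (a+1) < π a ∧ π (b+1) < π a) ↔ (π (a-1) < π a ∧ π (a+1) < π a))
    (h4 : b < n → ((π a < π (b+1) ∧ π (b+2) < π (b+1)) ↔ (π b < π (b+1) ∧ π (b+2) < π (b+1)))) :
    pinFinset n (rev π a b) = pinFinset n π := by
  have key : ∀ j, 1 ≤ j → j ≤ n →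
      ((rev π a b (j-1) < rev π a b j ∧ rev π a b (j+1) < rev π a b j) ↔
        (π ((if a ≤ j ∧ j ≤ b then a + b - j else j) - 1) <
           π (if a ≤ j ∧ j ≤ b then a + b - j else j) ∧
         π ((if a ≤ j ∧ j ≤ b then a + b - j else j) + 1) <
           π (if a ≤ j ∧ j ≤ b then a + b - j else j))) := by
    intro j hj1 hjn
    rcases lt_or_ge (j+1) a with hc | hc
    · -- j + 1 < a : untouched
      rw [if_neg (by omega)]
      rw [rev_not π (by omega), rev_not π (by omega), rev_not π (by omega)]
    rcases eq_or_lt_of_le hc with hc | hc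
    · -- j + 1 = a
      rw [if_neg (by omega)]
      rw [rev_not π (by omega), rev_not π (by omega), rev_mem π (by omega) (by omega)]
      have e3 : a + b - (j+1) = b := by omega
      have e4 : j + 1 = a := by omega
      have e1 : j - 1 = a - 2 := by omega
      have e2 : j = a - 1 := by omega
      rw [e3, e4, e1, e2]
      have h1' := h1 (by omega)
      constructor
      · intro h; exact ⟨h.1, (h1'.2 ⟨h.1, h.2⟩).2⟩
      · intro h; exact ⟨h.1, (h1'.1 ⟨h.1, h.2⟩).2⟩
    rcases lt_or_ge j b with hd | hd
    ·
      rcases eq_or_lt_of_le (show a ≤ j by omega) with he | he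
      · -- j = a
        rw [if_pos (by omega)]
        rw [rev_not π (by omega), rev_mem π (by omega) (by omega),
          rev_mem π (by omega) (by omega)]
        have e0 : a + b - j = b := by omega
        have e2 : a + b - (j+1) = b - 1 := by omega
        have e1 : j - 1 = a - 1 := by omega
        rw [e0, e2, e1]
        exact h2
      · -- a < j < b : interior
        rw [if_pos (by omega)]
        rw [rev_mem π (by omega) (by omega), rev_mem π (by omega) (by omega),
          rev_mem π (by omega) (by omega)]
        have e1 : a + b - (j-1) = (a + b - j) + 1 := by omega
        have e2 : a + b - (j+1) = (a + b - j) - 1 := by omega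
        rw [e1, e2]
        exact and_comm
    rcases eq_or_lt_of_le hd with hd' | hd'
    · -- j = b
      rw [if_pos (by omega)]
      rw [rev_mem π (by omega) (by omega), rev_mem π (by omega) (by omega),
        rev_not π (by omega)]
      have e1 : a + b - (j-1) = a + 1 := by omega
      have e2 : a + b - j = a := by omega
      have e3 : j + 1 = b + 1 := by omega
      rw [e1, e2, e3]
      exact h3
    rcases eq_or_lt_of_le (show b + 1 ≤ j by omega) with he | he
    · -- j = b + 1
      rw [if_neg (by omega)]
      rw [rev_mem π (by omega) (by omega), rev_not π (by omega), rev_not π (by omega)]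
      have e1 : a + b - (j - 1) = a := by omega
      have e2 : j = b + 1 := by omega
      have e3 : j + 1 = b + 2 := by omega
      rw [e1, e3, e2]
      exact h4 (by omega)
    · rw [if_neg (by omega)]
      rw [rev_not π (by omega), rev_not π (by omega), rev_not π (by omega)]
  have hσmem : ∀ j, 1 ≤ j → j ≤ n →
      (1 ≤ (if a ≤ j ∧ j ≤ b then a + b - j else j) ∧
        (if a ≤ j ∧ j ≤ b then a + b - j else j) ≤ n) := by
    intro j hj1 hjn; split <;> omega
  have hσσ : ∀ j, a ≤ j → j ≤ b →
      (if a ≤ a + b - j ∧ a + b - j ≤ b then a + b - (a + b - j) else a + b - j) = j := by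
    intro j hj1 hj2; rw [if_pos (by omega)]; omega
  have hval : ∀ j, rev π a b j = π (if a ≤ j ∧ j ≤ b then a + b - j else j) := by
    intro j; unfold rev; split <;> rfl
  ext y
  simp only [pinFinset, Finset.mem_image, Finset.mem_filter, Finset.mem_Icc]
  constructor
  · rintro ⟨j, ⟨⟨hj1, hjn⟩, hpin⟩, hv⟩
    refine ⟨if a ≤ j ∧ j ≤ b then a + b - j else j,
      ⟨⟨(hσmem j hj1 hjn).1, (hσmem j hj1 hjn).2⟩, (key j hj1 hjn).1 hpin⟩, ?_⟩
    rw [← hval j]; exact hv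
  · rintro ⟨j, ⟨⟨hj1, hjn⟩, hpin⟩, hv⟩
    by_cases hjab : a ≤ j ∧ j ≤ b
    · refine ⟨a + b - j, ⟨⟨by omega, by omega⟩, ?_⟩, ?_⟩
      · have := key (a+b-j) (by omega) (by omega)
        rw [hσσ j hjab.1 hjab.2] at this
        exact this.2 hpin
      · rw [hval (a+b-j), hσσ j hjab.1 hjab.2]; exact hv
    · refine ⟨j, ⟨⟨hj1, hjn⟩, ?_⟩, ?_⟩
      · have := key j hj1 hjn
        rw [if_neg hjab] at this
        exact this.2 hpin
      · rw [hval j, if_neg hjab]; exact hv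

lemma balancedRev_of (n a b : ℕ) (π : ℕ → ℕ) (ha : 1 ≤ a) (hab : a < b) (hb : b ≤ n)
    (h1 : 2 ≤ a → ((π (a-2) < π (a-1) ∧ π a < π (a-1)) ↔ (π (a-2) < π (a-1) ∧ π b < π (a-1))))
    (h2 : (π (a-1) < π b ∧ π (b-1) < π b) ↔ (π (b-1) < π b ∧ π (b+1) < π b))
    (h3 : (π (a+1) < π a ∧ π (b+1) < π a) ↔ (π (a-1) < π a ∧ π (a+1) < π a))
    (h4 : b < n → ((π a < π (b+1) ∧ π (b+2) < π (b+1)) ↔ (π b < π (b+1) ∧ π (b+2) < π (b+1)))) :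
    BalancedRev n π a b := pinFinset_rev_eq n a b π ha hab hb h1 h2 h3 h4

lemma balancedRev_self (n a : ℕ) (π : ℕ → ℕ) : BalancedRev n π a a := by
  unfold BalancedRev; rw [rev_self]




section S4
variable {n : ℕ} {π : ℕ → ℕ}

lemma exists_dell (hne : ∀ j, j ≤ n → π j ≠ π (j + 1)) {x z : ℕ} (hxz : x < z) (hzn : z ≤ n)
    (hx : π (x + 1) < π x) (hz : π z < π (z + 1)) :
    ∃ d, x < d ∧ d ≤ z ∧ DellAt π d := by
  have hP : ∃ j, x < j ∧ j ≤ z ∧ π j < π (j + 1) := ⟨z, hxz, le_refl z, hz⟩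
  classical
  obtain ⟨j, ⟨hj1, hj2, hj3⟩, hmin⟩ := Nat.findX hP
  refine ⟨j, hj1, hj2, ?_, hj3⟩
  rcases eq_or_lt_of_le (Nat.succ_le_of_lt hj1) with h | h
  · -- j = x + 1
    have h1 : j - 1 = x := by omega
    have h2 : j = x + 1 := by omega
    rw [h1, h2]; exact hx
  · -- x < j - 1
    have hnot := hmin (j - 1) (by omega)
    simp only [not_and, not_lt] at hnot
    have hle := hnot (by omega) (by omega)
    have : j - 1 + 1 = j := by omega
    rw [this] at hle
    have hne' := hne (j - 1) (by omega)
    rw [this] at hne'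
    omega

lemma descent_run (hne : ∀ j, j ≤ n → π j ≠ π (j + 1)) {g p : ℕ} (hp : p ≤ n)
    (hnd : ∀ d, g < d → d < p → ¬ DellAt π d) (hg : π (g + 1) < π g) :
    ∀ j, g ≤ j → j < p → π (j + 1) < π j := by
  intro j hgj hjp
  by_contra hc
  push_neg at hc
  have hasc : π j < π (j + 1) := lt_of_le_of_ne hc (hne j (by omega))
  rcases eq_or_lt_of_le hgj with h | h
  · subst h; omega
  · obtain ⟨d, hd1, hd2, hd3⟩ := exists_dell hne h (by omega) hg hasc
    exact hnd d hd1 (by omega) hd3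

end S4

section S5
variable {n : ℕ} {π : ℕ → ℕ}

lemma filter_card_succ (F : Finset ℕ) (x : ℕ) :
    (F.filter (· < x + 1)).card = (F.filter (· < x)).card + (if x ∈ F then 1 else 0) := by
  by_cases hx : x ∈ F
  · rw [if_pos hx]
    have he : F.filter (· < x + 1) = insert x (F.filter (· < x)) := by
      ext y
      simp only [Finset.mem_insert, Finset.mem_filter]
      constructor
      · rintro ⟨h1, h2⟩
        by_cases hyx : y = x
        · exact Or.inl hyx
        · exact Or.inr ⟨h1, by omega⟩
      · rintro (rfl | ⟨h1, h2⟩)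
        · exact ⟨hx, by omega⟩
        · exact ⟨h1, by omega⟩
    rw [he, Finset.card_insert_of_notMem (by simp [Finset.mem_filter])]
  · rw [if_neg hx]
    have he : F.filter (· < x + 1) = F.filter (· < x) := by
      ext y
      simp only [Finset.mem_filter]
      constructor
      · rintro ⟨h1, h2⟩
        refine ⟨h1, ?_⟩
        rcases eq_or_lt_of_le (Nat.lt_succ_iff.1 h2) with h | h
        · exact absurd (h ▸ h1) hx
        · exact h
      · rintro ⟨h1, h2⟩; exact ⟨h1, by omega⟩
    rw [he]
    rfl

/-- The interleaving invariant: scanning left to right, after a descending edge the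
numbers of dells and pinnacles so far are equal; after an ascending edge there is
one more dell than pinnacles. -/
lemma interleave_invariant (hne : ∀ j, j ≤ n → π j ≠ π (j + 1)) (h0 : π 1 < π 0) :
    ∀ x, x ≤ n →
      ((π (x + 1) < π x →
        (((Finset.Icc 1 n).filter fun i => π i < π (i - 1) ∧ π i < π (i + 1)).filter
            (· < x + 1)).card =
        (((Finset.Icc 1 n).filter fun i => π (i - 1) < π i ∧ π (i + 1) < π i).filter
            (· < x + 1)).card) ∧
      (π x < π (x + 1) →
        (((Finset.Icc 1 n).filter fun i => π i < π (i - 1) ∧ π i < π (i + 1)).filter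
            (· < x + 1)).card =
        (((Finset.Icc 1 n).filter fun i => π (i - 1) < π i ∧ π (i + 1) < π i).filter
            (· < x + 1)).card + 1)) := by
  set D := (Finset.Icc 1 n).filter fun i => π i < π (i - 1) ∧ π i < π (i + 1) with hD
  set P := (Finset.Icc 1 n).filter fun i => π (i - 1) < π i ∧ π (i + 1) < π i with hP
  have hDempty : (D.filter (· < 1)).card = 0 := by
    rw [Finset.card_eq_zero, Finset.filter_eq_empty_iff]
    intro y hy
    rw [hD, Finset.mem_filter, Finset.mem_Icc] at hy
    omega
  have hPempty : (P.filter (· < 1)).card = 0 := by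
    rw [Finset.card_eq_zero, Finset.filter_eq_empty_iff]
    intro y hy
    rw [hP, Finset.mem_filter, Finset.mem_Icc] at hy
    omega
  intro x
  induction x with
  | zero =>
    intro _
    refine ⟨fun _ => by rw [hDempty, hPempty], fun h => ?_⟩
    exfalso
    have h' : π 0 < π 1 := by simpa using h
    omega
  | succ x ih =>
    intro hxn
    have IH := ih (by omega)
    have hDmem : (x + 1 ∈ D) ↔ (π (x + 1) < π x ∧ π (x + 1) < π (x + 2)) := by
      rw [hD, Finset.mem_filter, Finset.mem_Icc]
      have e : x + 1 - 1 = x := by omega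
      rw [e]
      constructor
      · rintro ⟨_, h⟩; exact h
      · intro h; exact ⟨⟨by omega, by omega⟩, h⟩
    have hPmem : (x + 1 ∈ P) ↔ (π x < π (x + 1) ∧ π (x + 2) < π (x + 1)) := by
      rw [hP, Finset.mem_filter, Finset.mem_Icc]
      have e : x + 1 - 1 = x := by omega
      rw [e]
      constructor
      · rintro ⟨_, h⟩; exact h
      · intro h; exact ⟨⟨by omega, by omega⟩, h⟩
    have hDstep := filter_card_succ D (x + 1)
    have hPstep := filter_card_succ P (x + 1)
    have hne1 := hne x (by omega)
    have hne2 := hne (x + 1) (by omega)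
    have e12 : x + 1 + 1 = x + 2 := by omega
    rw [e12] at hne2
    rw [e12]
    simp only [e12] at hDstep hPstep
    rcases lt_or_gt_of_ne hne1 with hdir1 | hdir1
    · -- ascent at x
      rcases lt_or_gt_of_ne hne2 with hdir2 | hdir2
      · -- ascent at x+1 : x+1 neither dell nor pin
        have hnD : x + 1 ∉ D := fun h => by have := hDmem.1 h; omega
        have hnP : x + 1 ∉ P := fun h => by have := hPmem.1 h; omega
        rw [if_neg hnD] at hDstep
        rw [if_neg hnP] at hPstep
        have := IH.2 hdir1
        constructor
        · intro h; omega
        · intro _; omega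
      · -- descent at x+1 : x+1 is a pinnacle
        have hnD : x + 1 ∉ D := fun h => by have := hDmem.1 h; omega
        have hyP : x + 1 ∈ P := hPmem.2 ⟨hdir1, hdir2⟩
        rw [if_neg hnD] at hDstep
        rw [if_pos hyP] at hPstep
        have := IH.2 hdir1
        constructor
        · intro _; omega
        · intro h; omega
    · -- descent at x
      rcases lt_or_gt_of_ne hne2 with hdir2 | hdir2
      · -- ascent at x+1 : x+1 is a dell
        have hyD : x + 1 ∈ D := hDmem.2 ⟨hdir1, hdir2⟩
        have hnP : x + 1 ∉ P := fun h => by have := hPmem.1 h; omega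
        rw [if_pos hyD] at hDstep
        rw [if_neg hnP] at hPstep
        have := IH.1 hdir1
        constructor
        · intro h; omega
        · intro _; omega
      · -- descent at x+1 : neither
        have hnD : x + 1 ∉ D := fun h => by have := hDmem.1 h; omega
        have hnP : x + 1 ∉ P := fun h => by have := hPmem.1 h; omega
        rw [if_neg hnD] at hDstep
        rw [if_neg hnP] at hPstep
        have := IH.1 hdir1
        constructor
        · intro _; omega
        · intro h; omega

end S5

def seg (f : ℕ → ℕ) (a len : ℕ) : List ℕ := (List.range len).map (fun k => f (a + k))

lemma seg_append (f : ℕ → ℕ) (a l1 l2 : ℕ) :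
    seg f a l1 ++ seg f (a + l1) l2 = seg f a (l1 + l2) := by
  unfold seg
  rw [List.range_add, List.map_append, List.map_map]
  congr 1
  apply List.map_congr_left
  intro k _
  simp only [Function.comp_apply]
  congr 1
  omega

lemma seg_congr {f g : ℕ → ℕ} {a b len : ℕ} (h : ∀ k, k < len → f (a + k) = g (b + k)) :
    seg f a len = seg g b len := by
  unfold seg
  apply List.map_congr_left
  intro k hk
  exact h k (List.mem_range.1 hk)


lemma seg_split (f : ℕ → ℕ) (a l L : ℕ) (h : l ≤ L) :
    seg f a L = seg f a l ++ seg f (a + l) (L - l) := by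
  have := seg_append f a l (L - l)
  rw [show l + (L - l) = L from by omega] at this
  exact this.symm

lemma seg_one (f : ℕ → ℕ) (a : ℕ) : seg f a 1 = [f a] := by
  simp [seg, List.range_succ]

lemma not_mem_seg {f : ℕ → ℕ} {a len u : ℕ} (h : ∀ k, k < len → f (a + k) ≠ u) :
    u ∉ seg f a len := by
  simp only [seg, List.mem_map, List.mem_range, not_exists]
  rintro k ⟨hk, he⟩
  exact h k hk he

lemma toList_seg (n : ℕ) (π : ℕ → ℕ) : toList n π = seg π 1 n := by
  unfold toList seg
  apply List.map_congr_left
  intro k _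
  congr 1
  omega

section Move
variable (π : ℕ → ℕ)

lemma mr_lt {s m m' j : ℕ} (hs : 1 ≤ s) (hsm : s ≤ m) (hm' : m' = m - 1) (h : j < s) :
    rev (rev π s m) s m' j = π j := by
  subst hm'
  rw [rev_not _ (by omega), rev_not _ (by omega)]

lemma mr_mid {s m m' j : ℕ} (hs : 1 ≤ s) (hsm : s ≤ m) (hm' : m' = m - 1) (h1 : s ≤ j) (h2 : j < m) :
    rev (rev π s m) s m' j = π (j + 1) := by
  subst hm'
  rw [rev_mem _ (by omega) (by omega), rev_mem _ (by omega) (by omega)]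
  congr 1
  omega

lemma mr_top {s m m' : ℕ} (hs : 1 ≤ s) (hsm : s ≤ m) (hm' : m' = m - 1) :
    rev (rev π s m) s m' m = π s := by
  subst hm'
  rcases eq_or_lt_of_le hsm with h | h
  · subst h
    rw [rev_not _ (by omega), rev_mem _ (by omega) (by omega)]
    congr 1
    omega
  · rw [rev_not _ (by omega), rev_mem _ (by omega) (by omega)]
    congr 1
    omega

lemma mr_gt {s m m' j : ℕ} (hs : 1 ≤ s) (hsm : s ≤ m) (hm' : m' = m - 1) (h : m < j) :
    rev (rev π s m) s m' j = π j := by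
  subst hm'
  rw [rev_not _ (by omega), rev_not _ (by omega)]

lemma ml_lt {t s t' j : ℕ} (ht : 1 ≤ t) (hts : t ≤ s) (ht' : t' = t + 1) (h : j < t) :
    rev (rev π t s) t' s j = π j := by
  subst ht'
  rw [rev_not _ (by omega), rev_not _ (by omega)]

lemma ml_top {t s t' : ℕ} (ht : 1 ≤ t) (hts : t ≤ s) (ht' : t' = t + 1) :
    rev (rev π t s) t' s t = π s := by
  subst ht'
  rw [rev_not _ (by omega), rev_mem _ (by omega) (by omega)]
  congr 1
  omega

lemma ml_mid {t s t' j : ℕ} (ht : 1 ≤ t) (hts : t ≤ s) (ht' : t' = t + 1) (h1 : t < j) (h2 : j ≤ s) :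
    rev (rev π t s) t' s j = π (j - 1) := by
  subst ht'
  rw [rev_mem _ (by omega) (by omega), rev_mem _ (by omega) (by omega)]
  congr 1
  omega

lemma ml_gt {t s t' j : ℕ} (ht : 1 ≤ t) (hts : t ≤ s) (ht' : t' = t + 1) (h : s < j) :
    rev (rev π t s) t' s j = π j := by
  subst ht'
  rw [rev_not _ (by omega), rev_not _ (by omega)]

end Move

set_option maxHeartbeats 1000000 in
/-- Lemma 4.5. Assume `v_i ≤ v_q` with `i ≤ q`, and that
`u = Next π v_i` is not a pinnacle and satisfies `u < y_{q-1}`. Then two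
balanced reversals transform `π` into `π''` whose only difference with `π` is:
(i) if `u > v_q`, `u` is moved immediately before `cutD_π(u, y_{q-1}, v_q)` — so
that `u` lies in the descending set `D_{π''}(y_{q-1}, v_q)`;
(ii) if `u < v_q`, `u` is moved immediately before `v_q` and becomes the dell
`v''_q` of `π''`. -/
theorem statement16 (n : ℕ) (π : ℕ → ℕ) (hπ : IsExtPerm n π)
    (i q : ℕ) (hi : 1 ≤ i) (hiq : i ≤ q) (hq : q ≤ (dellPosList n π).length)
    (hvv : vVal n π i ≤ vVal n π q)
    (u : ℕ) (hu : u = π (vPos n π i + 1))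
    (hupin : u ∉ pinFinset n π)
    (huyq : u < yVal n π (q - 1)) :
    ∃ L : List (ℕ × ℕ), IsBalancedSeq n π L ∧ L.length = 2 ∧
      (vVal n π q < u →
        (∃ l₁ l₂, (toList n π).erase u = l₁ ++ cutD n π q u :: l₂ ∧
          toList n (applySeq π L) = l₁ ++ u :: cutD n π q u :: l₂) ∧
        ∃ c, 1 ≤ c ∧ c ≤ n ∧ applySeq π L c = u ∧ DescAt (applySeq π L) c) ∧
      (u < vVal n π q →
        (∃ l₁ l₂, (toList n π).erase u = l₁ ++ vVal n π q :: l₂ ∧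
          toList n (applySeq π L) = l₁ ++ u :: vVal n π q :: l₂) ∧
        vVal n (applySeq π L) q = u) := by
  classical
  obtain ⟨hbij, h0, hn1⟩ := hπ
  have hval : ∀ j, 1 ≤ j → j ≤ n → 1 ≤ π j ∧ π j ≤ n := by
    intro j h1 h2
    exact Set.mem_Icc.1 (hbij.mapsTo (Set.mem_Icc.2 ⟨h1, h2⟩))
  have hinj : ∀ j k, j ≤ n + 1 → k ≤ n + 1 → π j = π k → j = k := by
    intro j k hj hk he
    have hj' : j = 0 ∨ j = n + 1 ∨ (1 ≤ j ∧ j ≤ n) := by omega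
    have hk' : k = 0 ∨ k = n + 1 ∨ (1 ≤ k ∧ k ≤ n) := by omega
    rcases hj' with rfl | rfl | hj' <;> rcases hk' with rfl | rfl | hk'
    · rfl
    · rw [h0, hn1] at he; omega
    · rw [h0] at he; have := hval k hk'.1 hk'.2; omega
    · rw [h0, hn1] at he; omega
    · rfl
    · rw [hn1] at he; have := hval k hk'.1 hk'.2; omega
    · rw [h0] at he; have := hval j hj'.1 hj'.2; omega
    · rw [hn1] at he; have := hval j hj'.1 hj'.2; omega
    · exact hbij.injOn (Set.mem_Icc.2 hj') (Set.mem_Icc.2 hk') he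
  have hne : ∀ j, j ≤ n → π j ≠ π (j + 1) := by
    intro j hj he
    have := hinj j (j + 1) (by omega) (by omega) he
    omega
  set DS := ((Finset.Icc 1 n).filter fun i' => π i' < π (i' - 1) ∧ π i' < π (i' + 1)) with hDS
  set PS := ((Finset.Icc 1 n).filter fun i' => π (i' - 1) < π i' ∧ π (i' + 1) < π i') with hPS
  have hDsort : dellPosList n π = DS.sort (·≤·) := rfl
  have hPsort : pinPosList n π = PS.sort (·≤·) := rfl
  have hdlen : (dellPosList n π).length = DS.card := by rw [hDsort]; exact Finset.length_sort _
  have hqD : q - 1 < DS.card := by rw [hdlen] at hq; omega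
  have hiD : i - 1 < DS.card := by omega
  set p := vPos n π q with hpdef
  set s0 := vPos n π i with hs0def
  have hpent : (DS.sort (·≤·)).getD (q - 1) 0 = p := rfl
  have hsent : (DS.sort (·≤·)).getD (i - 1) 0 = s0 := rfl
  have hpP : p ∈ DS := by rw [← hpent]; exact entry_mem DS (q - 1) hqD
  have hsP : s0 ∈ DS := by rw [← hsent]; exact entry_mem DS (i - 1) hiD
  rw [hDS, Finset.mem_filter, Finset.mem_Icc] at hpP hsP
  obtain ⟨⟨hp1, hpn⟩, hpd1, hpd2⟩ := hpP
  obtain ⟨⟨hs1, hsn0⟩, hsd1, hsd2⟩ := hsP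
  have hvv' : π s0 ≤ π p := hvv
  have hus0 : π s0 < u := by rw [hu]; exact hsd2
  -- u is at most n+1
  have hπle : ∀ x, x ≤ n + 1 → π x ≤ n + 2 := by
    intro x hx
    have hx' : x = 0 ∨ x = n + 1 ∨ (1 ≤ x ∧ x ≤ n) := by omega
    rcases hx' with rfl | rfl | hx'
    · omega
    · omega
    · have := hval x hx'.1 hx'.2; omega
  have hyple : yPos n π (q - 1) ≤ n + 1 := by
    unfold yPos
    split
    · omega
    · by_cases hlen : q - 1 - 1 < (pinPosList n π).length
      · have hplen : q - 1 - 1 < PS.card := by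
          rw [hPsort, Finset.length_sort] at hlen; exact hlen
        have hmem := Finset.mem_Icc.1 (Finset.mem_filter.1 (entry_mem PS (q - 1 - 1) hplen)).1
        have e : (pinPosList n π).getD (q - 1 - 1) (n + 1) = (PS.sort (·≤·)).getD (q - 1 - 1) 0 := by
          rw [hPsort, getD_eq_get' _ _ _ (by rw [Finset.length_sort]; exact hplen),
            getD_eq_get' _ _ _ (by rw [Finset.length_sort]; exact hplen)]
        rw [e]
        omega
      · rw [List.getD_eq_default _ _ (by omega)]
  have hyvle : yVal n π (q - 1) ≤ n + 2 := hπle _ hyple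
  have hsn : s0 + 1 ≤ n := by
    by_contra h
    have he : s0 + 1 = n + 1 := by omega
    rw [he, hn1] at hu
    omega
  have hsu : u < π (s0 + 2) := by
    rcases lt_trichotomy (π (s0 + 2)) u with h | h | h
    · exfalso
      apply hupin
      rw [pinFinset, Finset.mem_image]
      refine ⟨s0 + 1, Finset.mem_filter.2 ⟨Finset.mem_Icc.2 ⟨by omega, hsn⟩, ?_, ?_⟩, hu.symm⟩
      · rw [show s0 + 1 - 1 = s0 from by omega]; omega
      · rw [show s0 + 1 + 1 = s0 + 2 from by omega]; omega
    · exfalso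
      have := hinj (s0 + 2) (s0 + 1) (by omega) (by omega) (by omega)
      omega
    · exact h
  have hvVq : vVal n π q = π p := rfl
  rcases lt_trichotomy u (π p) with hcase | hcase | hcase
  · -- ============ CASE A : u < v_q ============
    have hiq' : i < q := by
      rcases eq_or_lt_of_le hiq with h | h
      · exfalso
        subst h
        have hsp : s0 = p := rfl
        rw [hsp] at hu
        omega
      · exact h
    have hsp : s0 < p := by
      rw [← hpent, ← hsent]
      exact entry_lt_entry DS (by omega) hqD
    have hsp2 : s0 + 1 < p := by
      rcases eq_or_lt_of_le (by omega : s0 + 1 ≤ p) with h | h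
      · exfalso; rw [h] at hu; omega
      · exact h
    have hsp3 : s0 + 1 ≤ p - 2 := by
      rcases eq_or_lt_of_le (by omega : s0 + 1 ≤ p - 1) with h | h
      · exfalso; rw [h] at hu; omega
      · omega
    refine ⟨[(s0 + 1, p - 1), (s0 + 1, p - 2)], ?_, rfl, ?_, ?_⟩
    · -- balanced sequence
      refine ⟨by omega, by omega, by omega, ?_, by omega, by omega, by omega, ?_, trivial⟩
      · apply balancedRev_of n (s0 + 1) (p - 1) π (by omega) (by omega) (by omega)
        · intro _
          rw [show s0 + 1 - 2 = s0 - 1 from by omega, show s0 + 1 - 1 = s0 from by omega]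
          omega
        · rw [show s0 + 1 - 1 = s0 from by omega, show p - 1 - 1 = p - 2 from by omega,
            show p - 1 + 1 = p from by omega]
          omega
        · rw [show s0 + 1 - 1 = s0 from by omega, show s0 + 1 + 1 = s0 + 2 from by omega,
            show p - 1 + 1 = p from by omega]
          omega
        · intro _
          rw [show p - 1 + 1 = p from by omega, show p - 1 + 2 = p + 1 from by omega]
          omega
      · rcases eq_or_lt_of_le hsp3 with hdeg | hlt2
        · rw [← hdeg]
          exact balancedRev_self n (s0 + 1) _
        · have e0 : rev π (s0 + 1) (p - 1) (s0 - 1) = π (s0 - 1) := rev_not _ (by omega)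
          have e1 : rev π (s0 + 1) (p - 1) s0 = π s0 := rev_not _ (by omega)
          have e2 : rev π (s0 + 1) (p - 1) (s0 + 1) = π (p - 1) := by
            rw [rev_mem _ (by omega) (by omega)]; congr 1; omega
          have e3 : rev π (s0 + 1) (p - 1) (p - 2) = π (s0 + 2) := by
            rw [rev_mem _ (by omega) (by omega)]; congr 1; omega
          have e4 : rev π (s0 + 1) (p - 1) (p - 1) = π (s0 + 1) := by
            rw [rev_mem _ (by omega) (by omega)]; congr 1; omega
          have e5 : rev π (s0 + 1) (p - 1) p = π p := rev_not _ (by omega)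
          apply balancedRev_of n (s0 + 1) (p - 2) _ (by omega) hlt2 (by omega)
          · intro _
            rw [show s0 + 1 - 2 = s0 - 1 from by omega, show s0 + 1 - 1 = s0 from by omega,
              e0, e1, e2, e3]
            omega
          · rw [show s0 + 1 - 1 = s0 from by omega, show p - 2 + 1 = p - 1 from by omega,
              e1, e3, e4]
            omega
          · rw [show s0 + 1 - 1 = s0 from by omega, show s0 + 1 + 1 = s0 + 2 from by omega,
              show p - 2 + 1 = p - 1 from by omega, e1, e2, e4]
            omega
          · intro _
            rw [show p - 2 + 1 = p - 1 from by omega, show p - 2 + 2 = p from by omega,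
              e2, e3, e4, e5]
            omega
    · -- vVal < u : contradiction
      intro hcon
      exfalso
      rw [hvVq] at hcon
      omega
    · -- u < vVal : the real conclusion
      intro _
      have hL : applySeq π [(s0 + 1, p - 1), (s0 + 1, p - 2)]
          = rev (rev π (s0 + 1) (p - 1)) (s0 + 1) (p - 2) := rfl
      constructor
      · -- the list equations
        refine ⟨seg π 1 s0 ++ seg π (s0 + 2) (p - 2 - s0), seg π (p + 1) (n - p), ?_, ?_⟩
        · -- erase equation
          have hsplit : toList n π = seg π 1 s0 ++ ([u] ++ (seg π (s0 + 2) (p - 2 - s0)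
              ++ ([π p] ++ seg π (p + 1) (n - p)))) := by
            rw [toList_seg, seg_split π 1 s0 n (by omega)]
            congr 1
            rw [show 1 + s0 = s0 + 1 from by omega,
              seg_split π (s0 + 1) 1 (n - s0) (by omega), seg_one,
              show s0 + 1 + 1 = s0 + 2 from by omega, ← hu]
            congr 1
            rw [seg_split π (s0 + 2) (p - 2 - s0) (n - s0 - 1) (by omega),
              show s0 + 2 + (p - 2 - s0) = p from by omega,
              seg_split π p 1 (n - s0 - 1 - (p - 2 - s0)) (by omega), seg_one,
              show p + 1 = p + 1 from rfl,
              show n - s0 - 1 - (p - 2 - s0) - 1 = n - p from by omega]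
          rw [hsplit, List.erase_append_right _ (not_mem_seg (fun k hk he => by
            have := hinj (1 + k) (s0 + 1) (by omega) (by omega) (he.trans hu)
            omega)), List.singleton_append, List.erase_cons_head, hvVq]
          simp [List.append_assoc]
        · -- the new list
          rw [hL, toList_seg]
          rw [seg_split _ 1 s0 n (by omega), show 1 + s0 = s0 + 1 from by omega,
            seg_split _ (s0 + 1) (p - 2 - s0) (n - s0) (by omega),
            show s0 + 1 + (p - 2 - s0) = p - 1 from by omega,
            seg_split _ (p - 1) 1 (n - s0 - (p - 2 - s0)) (by omega), seg_one,
            show p - 1 + 1 = p from by omega,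
            seg_split _ p 1 (n - s0 - (p - 2 - s0) - 1) (by omega), seg_one,
            show n - s0 - (p - 2 - s0) - 1 - 1 = n - p from by omega]
          have c1 : seg (rev (rev π (s0 + 1) (p - 1)) (s0 + 1) (p - 2)) 1 s0 = seg π 1 s0 :=
            seg_congr (fun k hk => mr_lt π (by omega) (by omega) (by omega) (by omega))
          have c2 : seg (rev (rev π (s0 + 1) (p - 1)) (s0 + 1) (p - 2)) (s0 + 1) (p - 2 - s0)
              = seg π (s0 + 2) (p - 2 - s0) := by
            apply seg_congr
            intro k hk
            rw [mr_mid π (by omega) (by omega) (by omega) (by omega) (by omega)]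
            congr 1
            omega
          have c3 : rev (rev π (s0 + 1) (p - 1)) (s0 + 1) (p - 2) (p - 1) = π (s0 + 1) :=
            mr_top π (by omega) (by omega) (by omega)
          have c4 : rev (rev π (s0 + 1) (p - 1)) (s0 + 1) (p - 2) p = π p :=
            mr_gt π (by omega) (by omega) (by omega) (by omega)
          have c5 : seg (rev (rev π (s0 + 1) (p - 1)) (s0 + 1) (p - 2)) (p + 1) (n - p)
              = seg π (p + 1) (n - p) :=
            seg_congr (fun k hk => mr_gt π (by omega) (by omega) (by omega) (by omega))
          rw [c1, c2, c3, c4, c5, ← hu, hvVq]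
          simp [List.append_assoc]
      · -- vVal of the new permutation
        rw [hL]
        have m1 : ∀ j, j < s0 + 1 → rev (rev π (s0 + 1) (p - 1)) (s0 + 1) (p - 2) j = π j :=
          fun j hj => mr_lt π (by omega) (by omega) (by omega) hj
        have m2 : ∀ j, s0 + 1 ≤ j → j < p - 1 →
            rev (rev π (s0 + 1) (p - 1)) (s0 + 1) (p - 2) j = π (j + 1) :=
          fun j h1 h2 => mr_mid π (by omega) (by omega) (by omega) h1 h2
        have m3 : rev (rev π (s0 + 1) (p - 1)) (s0 + 1) (p - 2) (p - 1) = π (s0 + 1) :=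
          mr_top π (by omega) (by omega) (by omega)
        have m4 : ∀ j, p - 1 < j → rev (rev π (s0 + 1) (p - 1)) (s0 + 1) (p - 2) j = π j :=
          fun j hj => mr_gt π (by omega) (by omega) (by omega) hj
        set PP := rev (rev π (s0 + 1) (p - 1)) (s0 + 1) (p - 2) with hPi
        set T := ((Finset.Icc 1 n).filter fun j => PP j < PP (j - 1) ∧ PP j < PP (j + 1)) with hT
        have hTsort : dellPosList n PP = T.sort (·≤·) := rfl
        have hstat1 : ∀ j, 1 ≤ j → j ≤ s0 →
            ((PP j < PP (j - 1) ∧ PP j < PP (j + 1)) ↔ (π j < π (j - 1) ∧ π j < π (j + 1))) := by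
          intro j h1 h2
          rcases eq_or_lt_of_le h2 with he | hlt
          · subst he
            rw [m1 s0 (by omega), m1 (s0 - 1) (by omega), m2 (s0 + 1) (by omega) (by omega),
              show s0 + 1 + 1 = s0 + 2 from by omega]
            omega
          · rw [m1 j (by omega), m1 (j - 1) (by omega), m1 (j + 1) (by omega)]
        have hstat2 : ∀ j, s0 + 1 ≤ j → j ≤ p - 2 →
            ((PP j < PP (j - 1) ∧ PP j < PP (j + 1)) ↔ (π (j + 1) < π j ∧ π (j + 1) < π (j + 2))) := by
          intro j h1 h2
          have hj : PP j = π (j + 1) := m2 j h1 (by omega)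
          by_cases hja : j = s0 + 1
          · subst hja
            rw [hj, show s0 + 1 - 1 = s0 from by omega, show s0 + 1 + 1 = s0 + 2 from by omega,
              m1 s0 (by omega)]
            omega
          · by_cases hjb : j = p - 2
            · subst hjb
              have e : PP (p - 2 - 1) = π (p - 2) := by
                rw [show p - 2 - 1 = p - 3 from by omega, m2 (p - 3) (by omega) (by omega)]
                congr 1
                omega
              rw [hj, e, show p - 2 + 1 = p - 1 from by omega, show p - 2 + 2 = p from by omega, m3]
              omega
            · have e1 : PP (j - 1) = π j := by
                rw [m2 (j - 1) (by omega) (by omega)]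
                congr 1
                omega
              have e2 : PP (j + 1) = π (j + 2) := by
                rw [m2 (j + 1) (by omega) (by omega)]
              rw [hj, e1, e2]
        have hDSnot : ∀ b, b ∈ DS → s0 < b → s0 + 3 ≤ b := by
          intro b hb hlt
          have hb' := Finset.mem_filter.1 hb
          rcases (by omega : b = s0 + 1 ∨ b = s0 + 2 ∨ s0 + 3 ≤ b) with rfl | rfl | h
          · exfalso
            have := hb'.2.1
            rw [show s0 + 1 - 1 = s0 from by omega] at this
            omega
          · exfalso
            have := hb'.2.1
            rw [show s0 + 2 - 1 = s0 + 1 from by omega] at this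
            omega
          · exact h
        have hT1 : p - 1 ∈ T := by
          rw [hT, Finset.mem_filter, Finset.mem_Icc]
          have e1 : PP (p - 1 - 1) = π (p - 1) := by
            rw [show p - 1 - 1 = p - 2 from by omega, m2 (p - 2) (by omega) (by omega)]
            congr 1
            omega
          have e2 : PP (p - 1 + 1) = π p := by
            rw [show p - 1 + 1 = p from by omega]
            exact m4 p (by omega)
          rw [m3, e1, e2]
          refine ⟨⟨by omega, by omega⟩, by omega, by omega⟩
        have hScard : (DS.filter (· < p)).card = q - 1 := by
          have h' := filter_card_entry DS (q - 1) hqD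
          rw [hpent] at h'
          exact h'
        have himg : T.filter (· < p - 1)
            = (DS.filter (· < p)).image (fun b => if b ≤ s0 then b else b - 1) := by
          ext x
          simp only [Finset.mem_filter, Finset.mem_image]
          constructor
          · rintro ⟨hxT, hxp⟩
            have hxI := Finset.mem_Icc.1 (Finset.mem_filter.1 hxT).1
            have hxd := (Finset.mem_filter.1 hxT).2
            by_cases hxs : x ≤ s0
            · refine ⟨x, ⟨Finset.mem_filter.2 ⟨Finset.mem_Icc.2 ⟨by omega, by omega⟩,
                (hstat1 x (by omega) hxs).1 hxd⟩, by omega⟩, by rw [if_pos hxs]⟩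
            · refine ⟨x + 1, ⟨Finset.mem_filter.2 ⟨Finset.mem_Icc.2 ⟨by omega, by omega⟩, ?_⟩,
                by omega⟩, by rw [if_neg (by omega)]; omega⟩
              rw [show x + 1 - 1 = x from by omega, show x + 1 + 1 = x + 2 from by omega]
              exact (hstat2 x (by omega) (by omega)).1 hxd
          · rintro ⟨b, ⟨hbDS, hbp⟩, rfl⟩
            have hbD := Finset.mem_filter.1 hbDS
            have hbI := Finset.mem_Icc.1 hbD.1
            by_cases hbs : b ≤ s0
            · rw [if_pos hbs]
              exact ⟨Finset.mem_filter.2 ⟨Finset.mem_Icc.2 ⟨by omega, by omega⟩,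
                (hstat1 b (by omega) hbs).2 hbD.2⟩, by omega⟩
            · have hb3 := hDSnot b hbDS (by omega)
              rw [if_neg hbs]
              refine ⟨Finset.mem_filter.2 ⟨Finset.mem_Icc.2 ⟨by omega, by omega⟩, ?_⟩, by omega⟩
              apply (hstat2 (b - 1) (by omega) (by omega)).2
              rw [show b - 1 + 1 = b from by omega, show b - 1 + 2 = b + 1 from by omega]
              exact hbD.2
        have hinjOn : Set.InjOn (fun b => if b ≤ s0 then b else b - 1) (DS.filter (· < p)) := by
          intro b1 hb1 b2 hb2 he
          simp only [Finset.coe_filter, Set.mem_setOf_eq] at hb1 hb2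
          have h1 : b1 ≤ s0 ∨ s0 + 3 ≤ b1 := by
            by_cases h : b1 ≤ s0
            · exact Or.inl h
            · exact Or.inr (hDSnot b1 hb1.1 (by omega))
          have h2 : b2 ≤ s0 ∨ s0 + 3 ≤ b2 := by
            by_cases h : b2 ≤ s0
            · exact Or.inl h
            · exact Or.inr (hDSnot b2 hb2.1 (by omega))
          simp only at he
          split_ifs at he <;> omega
        have hTcard : (T.filter (· < p - 1)).card = q - 1 := by
          rw [himg, Finset.card_image_of_injOn hinjOn]
          exact hScard
        have hTq : q - 1 < T.card := by
          have hsub : insert (p - 1) (T.filter (· < p - 1)) ⊆ T := by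
            intro x hx
            rcases Finset.mem_insert.1 hx with rfl | hx'
            · exact hT1
            · exact Finset.mem_of_mem_filter _ hx'
          have hcard := Finset.card_le_card hsub
          rw [Finset.card_insert_of_notMem (fun hmem => by
            have := (Finset.mem_filter.1 hmem).2
            omega)] at hcard
          omega
        have hfin := entry_of_card_filter T (p - 1) (q - 1) hT1 hTcard
        show PP ((dellPosList n PP).getD (q - 1) 0) = u
        rw [hTsort, hfin, m3, ← hu]
  · -- ============ CASE u = v_q : degenerate ============
    refine ⟨[(1, 1), (1, 1)], ?_, rfl, ?_, ?_⟩
    · exact ⟨le_refl 1, le_refl 1, by omega, balancedRev_self n 1 π,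
        le_refl 1, le_refl 1, by omega, balancedRev_self n 1 _, trivial⟩
    · intro hcon; exfalso; rw [hvVq] at hcon; omega
    · intro hcon; exfalso; rw [hvVq] at hcon; omega
  · -- ============ CASE B : v_q < u ============
    have h01 : π 1 < π 0 := by
      rw [h0]
      have := hval 1 (by omega) (by omega)
      omega
    have hinv := interleave_invariant (n := n) (π := π) hne h01
    have hfilterD : DS.filter (· < n + 1) = DS := by
      apply Finset.filter_true_of_mem
      intro x hx
      have := Finset.mem_Icc.1 (Finset.mem_filter.1 hx).1
      omega
    have hfilterP : PS.filter (· < n + 1) = PS := by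
      apply Finset.filter_true_of_mem
      intro x hx
      have := Finset.mem_Icc.1 (Finset.mem_filter.1 hx).1
      omega
    have hnn : π n < π (n + 1) := by
      rw [hn1]
      have := hval n (by omega) (by omega)
      omega
    have htot := (hinv n (le_refl n)).2 hnn
    rw [← hDS, ← hPS, hfilterD, hfilterP] at htot
    have hpDS : p ∈ DS := by rw [← hpent]; exact entry_mem DS (q - 1) hqD
    have hDSsplit : ∀ d, d ∈ DS → p ≤ d ∨ (2 ≤ q ∧ d ≤ (DS.sort (·≤·)).getD (q - 2) 0) := by
      intro d hd
      have hdl : d ∈ DS.sort (·≤·) := (Finset.mem_sort _).2 hd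
      obtain ⟨⟨r, hr⟩, hrd⟩ := List.mem_iff_get.1 hdl
      have hrc : r < DS.card := by
        have hr2 := hr
        rw [Finset.length_sort] at hr2
        exact hr2
      have hde : (DS.sort (·≤·)).getD r 0 = d := by rw [getD_eq_get _ _ hr]; exact hrd
      rcases lt_or_ge r (q - 1) with hrq | hrq
      · right
        refine ⟨by omega, ?_⟩
        rcases eq_or_lt_of_le (by omega : r ≤ q - 2) with he | hlt'
        · rw [← hde, he]
        · exact le_of_lt (by rw [← hde]; exact entry_lt_entry DS hlt' (by omega))
      · left
        rcases eq_or_lt_of_le hrq with he | hlt'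
        · rw [← hpent, ← hde, ← he]
        · exact le_of_lt (by rw [← hpent, ← hde]; exact entry_lt_entry DS hlt' hrc)
    have hgpack : ∃ g, yPos n π (q - 1) = g ∧ u < π g ∧ g < p ∧
        (∀ j, g ≤ j → j < p → π (j + 1) < π j) ∧ (i < q → s0 + 1 < g) := by
      rcases (by omega : q = 1 ∨ 2 ≤ q) with hq1 | hq2
      · have hnod : ∀ d, 0 < d → d < p → ¬ DellAt π d := by
          intro d _ hdp hdell
          have hdDS : d ∈ DS := Finset.mem_filter.2 ⟨Finset.mem_Icc.2 ⟨by omega, by omega⟩,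
            hdell.1, hdell.2⟩
          rcases hDSsplit d hdDS with h | ⟨h2, _⟩
          · omega
          · omega
        refine ⟨0, by rw [hq1]; rfl, ?_, by omega, descent_run hne hpn hnod h01, fun h => by omega⟩
        · rw [h0]
          have := hval (s0 + 1) (by omega) hsn
          omega
      · have hplen2 : q - 2 < PS.card := by omega
        have hlenPS : q - 2 < (PS.sort (·≤·)).length := by
          rw [Finset.length_sort]
          exact hplen2
        have hg0PS : (PS.sort (·≤·)).getD (q - 2) 0 ∈ PS := entry_mem PS (q - 2) hplen2
        have hgmem := Finset.mem_filter.1 hg0PS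
        have hgI := Finset.mem_Icc.1 hgmem.1
        have hgpin := hgmem.2
        have hyg : yPos n π (q - 1) = (PS.sort (·≤·)).getD (q - 2) 0 := by
          unfold yPos
          rw [if_neg (by omega), hPsort, show q - 1 - 1 = q - 2 from by omega,
            getD_eq_get' _ _ _ hlenPS, getD_eq_get _ _ hlenPS]
        have hgu' : u < π ((PS.sort (·≤·)).getD (q - 2) 0) := by
          have h' : u < π (yPos n π (q - 1)) := huyq
          rw [hyg] at h'
          exact h'
        have hcpg : (PS.filter (· < (PS.sort (·≤·)).getD (q - 2) 0)).card = q - 2 :=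
          filter_card_entry PS (q - 2) hplen2
        have hinvg := (hinv ((PS.sort (·≤·)).getD (q - 2) 0) (by omega)).1 hgpin.2
        rw [← hDS, ← hPS] at hinvg
        have hcpg1 : (PS.filter (· < (PS.sort (·≤·)).getD (q - 2) 0 + 1)).card = q - 1 := by
          rw [filter_card_succ PS _, if_pos hg0PS]
          omega
        have hcdg1 : (DS.filter (· < (PS.sort (·≤·)).getD (q - 2) 0 + 1)).card = q - 1 := by
          rw [hinvg]
          exact hcpg1
        have hdq2 := entry_lt_of_card_filter DS ((PS.sort (·≤·)).getD (q - 2) 0 + 1) (q - 2)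
          (by omega)
        have hdg_ne : (DS.sort (·≤·)).getD (q - 2) 0 ≠ (PS.sort (·≤·)).getD (q - 2) 0 := by
          intro he
          have hdmem := Finset.mem_filter.1 (entry_mem DS (q - 2) hdq2.1)
          rw [he] at hdmem
          have h1' := hdmem.2.1
          omega
        have hdq2' : (DS.sort (·≤·)).getD (q - 2) 0 < (PS.sort (·≤·)).getD (q - 2) 0 := by
          have := hdq2.2
          omega
        have hcdp : (DS.filter (· < p)).card = q - 1 := by
          have h' := filter_card_entry DS (q - 1) hqD
          rw [hpent] at h'
          exact h'
        have hcdp1 : (DS.filter (· < p + 1)).card = q := by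
          rw [filter_card_succ DS p, if_pos hpDS]
          omega
        have hinvp := (hinv p hpn).2 hpd2
        rw [← hDS, ← hPS] at hinvp
        have hgp2 := entry_lt_of_card_filter PS (p + 1) (q - 2) (by omega)
        have hgne : (PS.sort (·≤·)).getD (q - 2) 0 ≠ p := by
          intro he
          rw [he] at hgpin
          omega
        have hgp : (PS.sort (·≤·)).getD (q - 2) 0 < p := by
          have := hgp2.2
          omega
        have hnod : ∀ d, (PS.sort (·≤·)).getD (q - 2) 0 < d → d < p → ¬ DellAt π d := by
          intro d hgd hdp hdell
          have hdDS : d ∈ DS := Finset.mem_filter.2 ⟨Finset.mem_Icc.2 ⟨by omega, by omega⟩,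
            hdell.1, hdell.2⟩
          rcases hDSsplit d hdDS with h | ⟨_, h⟩
          · omega
          · omega
        refine ⟨(PS.sort (·≤·)).getD (q - 2) 0, hyg, hgu', hgp,
          descent_run hne hpn hnod hgpin.2, ?_⟩
        intro hilt'
        have hs0le : s0 ≤ (DS.sort (·≤·)).getD (q - 2) 0 := by
          rcases eq_or_lt_of_le (by omega : i - 1 ≤ q - 2) with he | hlt'
          · rw [← hsent, he]
          · exact le_of_lt (by rw [← hsent]; exact entry_lt_entry DS hlt' (by omega))
        have hne' : s0 + 1 ≠ (PS.sort (·≤·)).getD (q - 2) 0 := by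
          intro he
          rw [← he] at hgu'
          omega
        omega
    obtain ⟨g, hyg, hgu, hgp, hgdesc, hgsi⟩ := hgpack
    -- the cut point
    have hcutd : cutD n π q u = sSup ((insert (π p) (π '' Set.Ioo g p)) ∩ Set.Iio u) := by
      unfold cutD
      rw [hyg, ← hpdef]
      rfl
    have hfin : ((insert (π p) (π '' Set.Ioo g p)) ∩ Set.Iio u).Finite :=
      Set.Finite.inter_of_left (((Set.finite_Ioo g p).image π).insert _) _
    have hnon : ((insert (π p) (π '' Set.Ioo g p)) ∩ Set.Iio u).Nonempty :=
      ⟨π p, Set.mem_insert _ _, hcase⟩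
    have hmem := Nat.sSup_mem hnon hfin.bddAbove
    have hub : ∀ z, z ∈ (insert (π p) (π '' Set.Ioo g p)) ∩ Set.Iio u →
        z ≤ sSup ((insert (π p) (π '' Set.Ioo g p)) ∩ Set.Iio u) :=
      fun z hz => le_csSup hfin.bddAbove hz
    obtain ⟨t, hgt, htp, hπt⟩ : ∃ t, g < t ∧ t ≤ p ∧ π t = cutD n π q u := by
      rw [hcutd]
      rcases Set.mem_insert_iff.1 hmem.1 with h | h
      · exact ⟨p, hgp, le_refl p, h.symm⟩
      · obtain ⟨x, hx, hxe⟩ := h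
        exact ⟨x, hx.1, le_of_lt hx.2, hxe⟩
    have hctu : π t < u := by
      rw [hπt, hcutd]
      exact hmem.2
    have hvqct : π p ≤ π t := by
      rw [hπt, hcutd]
      exact hub _ ⟨Set.mem_insert _ _, hcase⟩
    have htn : t ≤ n := le_trans htp hpn
    have ht1u : u < π (t - 1) := by
      rcases eq_or_lt_of_le (by omega : g ≤ t - 1) with he | hlt
      · rw [← he]
        exact hgu
      · have hdesc := hgdesc (t - 1) (by omega) (by omega)
        rw [show t - 1 + 1 = t from by omega] at hdesc
        rcases lt_trichotomy (π (t - 1)) u with h | h | h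
        · exfalso
          have hmm : π (t - 1) ∈ (insert (π p) (π '' Set.Ioo g p)) ∩ Set.Iio u :=
            ⟨Set.mem_insert_iff.2 (Or.inr ⟨t - 1, ⟨hlt, by omega⟩, rfl⟩), h⟩
          have h2' := hub _ hmm
          rw [hπt, hcutd] at hctu
          rw [← hcutd, ← hπt] at h2'
          omega
        · exfalso
          have heq := hinj (t - 1) (s0 + 1) (by omega) (by omega) (by rw [h, hu])
          rcases eq_or_lt_of_le hiq with hieq | hilt
          · have hsp0 : s0 = p := by rw [hs0def, hpdef, hieq]
            omega
          · have := hgsi hilt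
            omega
        · exact h
    rcases eq_or_lt_of_le hiq with hieq | hilt
    · -- ===== B-left : i = q, move u from p+1 back to t =====
      have hsp0 : s0 = p := by rw [hs0def, hpdef, hieq]
      have hu' : u = π (p + 1) := by rw [hu, hsp0]
      have hsu' : u < π (p + 2) := by rw [← hsp0]; exact hsu
      have hpn' : p + 1 ≤ n := by omega
      refine ⟨[(t, p + 1), (t + 1, p + 1)], ?_, rfl, ?_, ?_⟩
      · refine ⟨by omega, by omega, by omega, ?_, by omega, by omega, by omega, ?_, trivial⟩
        · apply balancedRev_of n t (p + 1) π (by omega) (by omega) (by omega)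
          · intro _
            omega
          · rw [show p + 1 - 1 = p from by omega, show p + 1 + 1 = p + 2 from by omega]
            omega
          · rw [show p + 1 + 1 = p + 2 from by omega]
            omega
          · intro _
            rw [show p + 1 + 1 = p + 2 from by omega, show p + 1 + 2 = p + 3 from by omega]
            omega
        · rcases eq_or_lt_of_le htp with hdeg | hlt2
          · rw [hdeg]
            exact balancedRev_self n (p + 1) _
          · have E2 : rev π t (p + 1) t = π (p + 1) := by
              rw [rev_mem _ (by omega) (by omega)]
              congr 1
              omega
            have E3 : rev π t (p + 1) (t + 1) = π p := by
              rw [rev_mem _ (by omega) (by omega)]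
              congr 1
              omega
            have E4 : rev π t (p + 1) (p + 1) = π t := by
              rw [rev_mem _ (by omega) (by omega)]
              congr 1
              omega
            have E6 : rev π t (p + 1) (p + 2) = π (p + 2) := rev_not _ (by omega)
            apply balancedRev_of n (t + 1) (p + 1) _ (by omega) (by omega) (by omega)
            · intro _
              rw [show t + 1 - 2 = t - 1 from by omega, show t + 1 - 1 = t from by omega,
                E2, E3, E4]
              omega
            · rw [show t + 1 - 1 = t from by omega, show p + 1 - 1 = p from by omega,
                show p + 1 + 1 = p + 2 from by omega, E2, E4, E6]
              omega
            · rw [show t + 1 + 1 = t + 2 from by omega, show t + 1 - 1 = t from by omega,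
                show p + 1 + 1 = p + 2 from by omega, E2, E3, E6]
              omega
            · intro _
              rw [show p + 1 + 1 = p + 2 from by omega, show p + 1 + 2 = p + 3 from by omega,
                E3, E4, E6]
              omega
      · -- conclusion (the active one)
        intro _
        have hL : applySeq π [(t, p + 1), (t + 1, p + 1)]
            = rev (rev π t (p + 1)) (t + 1) (p + 1) := rfl
        constructor
        · refine ⟨seg π 1 (t - 1), seg π (t + 1) (p - t) ++ seg π (p + 2) (n - p - 1), ?_, ?_⟩
          · -- erase equation
            have hsplit : toList n π = (seg π 1 (t - 1) ++ (seg π t 1 ++ seg π (t + 1) (p - t)))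
                ++ ([u] ++ seg π (p + 2) (n - p - 1)) := by
              rw [toList_seg, seg_split π 1 (t - 1) n (by omega)]
              rw [show 1 + (t - 1) = t from by omega,
                seg_split π t 1 (n - (t - 1)) (by omega),
                seg_split π (t + 1) (p - t) (n - (t - 1) - 1) (by omega),
                show t + 1 + (p - t) = p + 1 from by omega,
                seg_split π (p + 1) 1 (n - (t - 1) - 1 - (p - t)) (by omega), seg_one π (p + 1),
                ← hu',
                show p + 1 + 1 = p + 2 from by omega,
                show n - (t - 1) - 1 - (p - t) - 1 = n - p - 1 from by omega]
              simp [List.append_assoc]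
            rw [hsplit, List.erase_append_right, List.singleton_append, List.erase_cons_head,
              ← hπt, seg_one]
            · simp [List.append_assoc]
            · intro hmem'
              rcases List.mem_append.1 hmem' with h' | h'
              · exact not_mem_seg (fun k hk he => by
                  have := hinj (1 + k) (s0 + 1) (by omega) (by omega) (he.trans hu)
                  omega) h'
              rcases List.mem_append.1 h' with h'' | h''
              · exact not_mem_seg (fun k hk he => by
                  have := hinj (t + k) (s0 + 1) (by omega) (by omega) (he.trans hu)
                  omega) h''
              · exact not_mem_seg (fun k hk he => by
                  have := hinj (t + 1 + k) (s0 + 1) (by omega) (by omega) (he.trans hu)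
                  omega) h''
          · -- new list
            rw [hL, toList_seg, seg_split _ 1 (t - 1) n (by omega),
              show 1 + (t - 1) = t from by omega,
              seg_split _ t 1 (n - (t - 1)) (by omega),
              seg_one (rev (rev π t (p + 1)) (t + 1) (p + 1)) t,
              seg_split _ (t + 1) (p + 1 - t) (n - (t - 1) - 1) (by omega),
              show t + 1 + (p + 1 - t) = p + 2 from by omega,
              show n - (t - 1) - 1 - (p + 1 - t) = n - p - 1 from by omega]
            have c1 : seg (rev (rev π t (p + 1)) (t + 1) (p + 1)) 1 (t - 1) = seg π 1 (t - 1) :=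
              seg_congr (fun k hk => ml_lt π (by omega) (by omega) (by omega) (by omega))
            have c2 : rev (rev π t (p + 1)) (t + 1) (p + 1) t = π (p + 1) :=
              ml_top π (by omega) (by omega) (by omega)
            have c3 : seg (rev (rev π t (p + 1)) (t + 1) (p + 1)) (t + 1) (p + 1 - t)
                = seg π t (p + 1 - t) := by
              apply seg_congr
              intro k hk
              rw [ml_mid π (by omega) (by omega) (by omega) (by omega) (by omega)]
              congr 1
              omega
            have c4 : seg (rev (rev π t (p + 1)) (t + 1) (p + 1)) (p + 2) (n - p - 1)
                = seg π (p + 2) (n - p - 1) :=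
              seg_congr (fun k hk => ml_gt π (by omega) (by omega) (by omega) (by omega))
            rw [c1, c2, c3, c4, ← hu',
              seg_split π t 1 (p + 1 - t) (by omega), seg_one π t, ← hπt,
              show t + 1 = t + 1 from rfl, show p + 1 - t - 1 = p - t from by omega]
            simp [List.append_assoc]
        · -- the descent position
          refine ⟨t, by omega, by omega, ?_, ?_, ?_⟩
          · rw [hL]
            rw [ml_top π (by omega) (by omega) rfl, ← hu']
          · rw [hL, ml_top π (by omega) (by omega) rfl,
              ml_lt π (by omega) (by omega) rfl (by omega), ← hu']
            exact ht1u
          · rw [hL, ml_top π (by omega) (by omega) rfl,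
              ml_mid π (by omega) (by omega) rfl (by omega) (by omega),
              show t + 1 - 1 = t from by omega, ← hu']
            exact hctu
      · intro hcon
        exfalso
        rw [hvVq] at hcon
        omega
    · -- ===== B-right : i < q, move u from s0+1 forward to t-1 =====
      have hsg : s0 + 1 < g := hgsi hilt
      have hts : s0 + 3 ≤ t := by omega
      refine ⟨[(s0 + 1, t - 1), (s0 + 1, t - 2)], ?_, rfl, ?_, ?_⟩
      · refine ⟨by omega, by omega, by omega, ?_, by omega, by omega, by omega, ?_, trivial⟩
        · apply balancedRev_of n (s0 + 1) (t - 1) π (by omega) (by omega) (by omega)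
          · intro _
            rw [show s0 + 1 - 2 = s0 - 1 from by omega, show s0 + 1 - 1 = s0 from by omega]
            omega
          · rw [show s0 + 1 - 1 = s0 from by omega, show t - 1 + 1 = t from by omega]
            omega
          · rw [show s0 + 1 - 1 = s0 from by omega, show s0 + 1 + 1 = s0 + 2 from by omega,
              show t - 1 + 1 = t from by omega]
            omega
          · intro _
            rw [show t - 1 + 1 = t from by omega, show t - 1 + 2 = t + 1 from by omega]
            omega
        · rcases eq_or_lt_of_le (by omega : s0 + 1 ≤ t - 2) with hdeg | hlt2
          · rw [← hdeg]
            exact balancedRev_self n (s0 + 1) _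
          · have F1 : rev π (s0 + 1) (t - 1) s0 = π s0 := rev_not _ (by omega)
            have F2 : rev π (s0 + 1) (t - 1) (s0 + 1) = π (t - 1) := by
              rw [rev_mem _ (by omega) (by omega)]
              congr 1
              omega
            have F3 : rev π (s0 + 1) (t - 1) (t - 2) = π (s0 + 2) := by
              rw [rev_mem _ (by omega) (by omega)]
              congr 1
              omega
            have F4 : rev π (s0 + 1) (t - 1) (t - 1) = π (s0 + 1) := by
              rw [rev_mem _ (by omega) (by omega)]
              congr 1
              omega
            have F5 : rev π (s0 + 1) (t - 1) t = π t := rev_not _ (by omega)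
            apply balancedRev_of n (s0 + 1) (t - 2) _ (by omega) hlt2 (by omega)
            · intro _
              rw [show s0 + 1 - 2 = s0 - 1 from by omega, show s0 + 1 - 1 = s0 from by omega,
                F1, F2, F3]
              omega
            · rw [show s0 + 1 - 1 = s0 from by omega, show t - 2 + 1 = t - 1 from by omega,
                F1, F3, F4]
              omega
            · rw [show s0 + 1 - 1 = s0 from by omega, show s0 + 1 + 1 = s0 + 2 from by omega,
                show t - 2 + 1 = t - 1 from by omega, F1, F2, F4]
              omega
            · intro _
              rw [show t - 2 + 1 = t - 1 from by omega, show t - 2 + 2 = t from by omega,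
                F2, F3, F4, F5]
              omega
      · intro _
        have hL : applySeq π [(s0 + 1, t - 1), (s0 + 1, t - 2)]
            = rev (rev π (s0 + 1) (t - 1)) (s0 + 1) (t - 2) := rfl
        constructor
        · refine ⟨seg π 1 s0 ++ seg π (s0 + 2) (t - 2 - s0), seg π (t + 1) (n - t), ?_, ?_⟩
          · have hsplit : toList n π = seg π 1 s0 ++ ([u] ++ ((seg π (s0 + 2) (t - 2 - s0)
                ++ seg π t 1) ++ seg π (t + 1) (n - t))) := by
              rw [toList_seg, seg_split π 1 s0 n (by omega),
                show 1 + s0 = s0 + 1 from by omega,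
                seg_split π (s0 + 1) 1 (n - s0) (by omega), seg_one π (s0 + 1), ← hu,
                show s0 + 1 + 1 = s0 + 2 from by omega,
                seg_split π (s0 + 2) (t - 2 - s0) (n - s0 - 1) (by omega),
                show s0 + 2 + (t - 2 - s0) = t from by omega,
                seg_split π t 1 (n - s0 - 1 - (t - 2 - s0)) (by omega), seg_one π t,
                show n - s0 - 1 - (t - 2 - s0) - 1 = n - t from by omega]
              simp [List.append_assoc]
            rw [hsplit, List.erase_append_right _ (not_mem_seg (fun k hk he => by
              have := hinj (1 + k) (s0 + 1) (by omega) (by omega) (he.trans hu)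
              omega)), List.singleton_append, List.erase_cons_head, ← hπt, seg_one]
            simp [List.append_assoc]
          · rw [hL, toList_seg, seg_split _ 1 s0 n (by omega),
              show 1 + s0 = s0 + 1 from by omega,
              seg_split _ (s0 + 1) (t - 2 - s0) (n - s0) (by omega),
              show s0 + 1 + (t - 2 - s0) = t - 1 from by omega,
              seg_split _ (t - 1) 1 (n - s0 - (t - 2 - s0)) (by omega),
              seg_one (rev (rev π (s0 + 1) (t - 1)) (s0 + 1) (t - 2)) (t - 1),
              show t - 1 + 1 = t from by omega,
              seg_split _ t 1 (n - s0 - (t - 2 - s0) - 1) (by omega),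
              seg_one (rev (rev π (s0 + 1) (t - 1)) (s0 + 1) (t - 2)) t,
              show n - s0 - (t - 2 - s0) - 1 - 1 = n - t from by omega]
            have c1 : seg (rev (rev π (s0 + 1) (t - 1)) (s0 + 1) (t - 2)) 1 s0 = seg π 1 s0 :=
              seg_congr (fun k hk => mr_lt π (by omega) (by omega) (by omega) (by omega))
            have c2 : seg (rev (rev π (s0 + 1) (t - 1)) (s0 + 1) (t - 2)) (s0 + 1) (t - 2 - s0)
                = seg π (s0 + 2) (t - 2 - s0) := by
              apply seg_congr
              intro k hk
              rw [mr_mid π (by omega) (by omega) (by omega) (by omega) (by omega)]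
              congr 1
              omega
            have c3 : rev (rev π (s0 + 1) (t - 1)) (s0 + 1) (t - 2) (t - 1) = π (s0 + 1) :=
              mr_top π (by omega) (by omega) (by omega)
            have c4 : rev (rev π (s0 + 1) (t - 1)) (s0 + 1) (t - 2) t = π t :=
              mr_gt π (by omega) (by omega) (by omega) (by omega)
            have c5 : seg (rev (rev π (s0 + 1) (t - 1)) (s0 + 1) (t - 2)) (t + 1) (n - t)
                = seg π (t + 1) (n - t) :=
              seg_congr (fun k hk => mr_gt π (by omega) (by omega) (by omega) (by omega))
            rw [c1, c2, c3, c4, c5, ← hu, ← hπt]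
            simp [List.append_assoc]
        · refine ⟨t - 1, by omega, by omega, ?_, ?_, ?_⟩
          · rw [hL, mr_top π (by omega) (by omega) (by omega), ← hu]
          · rw [hL, mr_top π (by omega) (by omega) (by omega),
              show t - 1 - 1 = t - 2 from by omega,
              mr_mid π (by omega) (by omega) (by omega) (by omega) (by omega),
              show t - 2 + 1 = t - 1 from by omega, ← hu]
            exact ht1u
          · rw [hL, mr_top π (by omega) (by omega) (by omega),
              show t - 1 + 1 = t from by omega,
              mr_gt π (by omega) (by omega) (by omega) (by omega), ← hu]
            exact hctu
      · intro hcon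
        exfalso
        rw [hvVq] at hcon
        omega
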